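/- For all positive reals a, b, p, q, F satisfying 3p + q ≤ F, it holds that a·ln(p/a) + b·ln(q/b) ≤ −a + (a + b)·ln( F/(a + b) ). -/

import Mathlib

/-- the key estimate (H_third), via the log-sum inequality and
`ln 3 > 1`: for all positive reals `a, b, p, q, F` with `3p + q ≤ F`,
`a·ln(p/a) + b·ln(q/b) ≤ -a + (a + b)·ln(F/(a + b))`. -/
theorem logsum_estimate (a b p q F : ℝ)
    (ha : 0 < a) (hb : 0 < b) (hp : 0 < p) (hq : 0 < q) (hF : 0 < F)
    (h3 : 3 * p + q ≤ F) :
    a * Real.log (p / a) + b * Real.log (q / b) ≤ -a + (a + b) * Real.log (F / (a + b)) := by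
  have hab : 0 < a + b := by linarith
  set X : ℝ := 3 * p * (a + b) / (a * F) with hXdef
  set Y : ℝ := q * (a + b) / (b * F) with hYdef
  have hX : 0 < X := by positivity
  have hY : 0 < Y := by positivity
  have h1 := Real.log_le_sub_one_of_pos hX
  have h2 := Real.log_le_sub_one_of_pos hY
  have hlog3 : 1 ≤ Real.log 3 := by
    rw [Real.le_log_iff_exp_le (by norm_num : (0:ℝ) < 3)]
    exact le_of_lt (lt_trans Real.exp_one_lt_d9 (by norm_num))
  have e1 : Real.log (p / a) = Real.log X + Real.log (F / (a + b)) - Real.log 3 := by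
    have hpa : p / a = X * (F / (a + b)) / 3 := by
      rw [hXdef]; field_simp
    rw [hpa, Real.log_div (by positivity) (by norm_num),
      Real.log_mul (ne_of_gt hX) (by positivity)]
  have e2 : Real.log (q / b) = Real.log Y + Real.log (F / (a + b)) := by
    have hqb : q / b = Y * (F / (a + b)) := by
      rw [hYdef]; field_simp
    rw [hqb, Real.log_mul (ne_of_gt hY) (by positivity)]
  have hkey : a * X + b * Y ≤ a + b := by
    have hx : a * X = 3 * p * (a + b) / F := by
      rw [hXdef]; field_simp
    have hy : b * Y = q * (a + b) / F := by
      rw [hYdef]; field_simp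
    rw [hx, hy, ← add_div, div_le_iff₀ hF]
    nlinarith
  have ha3 : a ≤ a * Real.log 3 := by
    nlinarith
  rw [e1, e2]
  nlinarith [mul_le_mul_of_nonneg_left h1 (le_of_lt ha),
    mul_le_mul_of_nonneg_left h2 (le_of_lt hb)]
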